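/- The identity Σ_{i=0}^{n} i·C(2n, i) + Σ_{i=n+1}^{2n} n·C(2n, i) = n·2^{2n} − (n/2)·C(2n, n) holds for every positive integer n. -/

import Mathlib

open Finset

lemma auxA (m : ℕ) :
    ∑ i ∈ range (m + 2), i * Nat.choose (2 * (m + 1)) i = 2 * (m + 1) * 4 ^ m := by
  rw [Finset.sum_range_succ']
  simp only [zero_mul, add_zero]
  have h : ∀ i, (i + 1) * Nat.choose (2 * (m + 1)) (i + 1)
      = 2 * (m + 1) * Nat.choose (2 * m + 1) i := by
    intro i
    have := Nat.add_one_mul_choose_eq (2 * m + 1) i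
    have h2 : 2 * m + 1 + 1 = 2 * (m + 1) := by omega
    rw [h2] at this
    rw [mul_comm]
    exact this.symm
  calc ∑ i ∈ range (m + 1), (i + 1) * Nat.choose (2 * (m + 1)) (i + 1)
      = ∑ i ∈ range (m + 1), 2 * (m + 1) * Nat.choose (2 * m + 1) i :=
        Finset.sum_congr rfl fun i _ => h i
    _ = 2 * (m + 1) * ∑ i ∈ range (m + 1), Nat.choose (2 * m + 1) i := by
        rw [Finset.mul_sum]
    _ = 2 * (m + 1) * 4 ^ m := by rw [Nat.sum_range_choose_halfway]

lemma auxB (n : ℕ) :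
    ∑ i ∈ Icc (n + 1) (2 * n), Nat.choose (2 * n) i
      = ∑ i ∈ range n, Nat.choose (2 * n) i := by
  have h1 : Icc (n + 1) (2 * n) = Ico (n + 1) (2 * n + 1) := by
    rw [Finset.Ico_add_one_right_eq_Icc]
  rw [h1, Finset.sum_Ico_eq_sum_range]
  have h2 : 2 * n + 1 - (n + 1) = n := by omega
  rw [h2]
  rw [← Finset.sum_range_reflect (fun i => Nat.choose (2 * n) i) n]
  refine Finset.sum_congr rfl fun i hi => ?_
  simp only [Finset.mem_range] at hi
  have : n + 1 + i = 2 * n - (n - 1 - i) := by omega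
  rw [this]
  exact Nat.choose_symm (by omega)

lemma auxC (n : ℕ) :
    2 * (∑ i ∈ range n, Nat.choose (2 * n) i) + Nat.choose (2 * n) n = 2 ^ (2 * n) := by
  have h := Nat.sum_range_choose (2 * n)
  have hsplit : range (2 * n + 1) = range (n + 1) ∪ Ico (n + 1) (2 * n + 1) := by
    rw [Finset.range_eq_Ico, Finset.range_eq_Ico]
    exact (Finset.Ico_union_Ico_eq_Ico (a := 0) (b := n + 1) (c := 2 * n + 1) (by omega) (by omega)).symm
  rw [hsplit, Finset.sum_union (by
    rw [Finset.range_eq_Ico]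
    exact Finset.Ico_disjoint_Ico_consecutive 0 (n+1) (2*n+1)),
    Finset.sum_range_succ] at h
  have hB := auxB n
  rw [show Icc (n + 1) (2 * n) = Ico (n + 1) (2 * n + 1) from by rw [Finset.Ico_add_one_right_eq_Icc]] at hB
  rw [hB] at h
  linarith

theorem stmt_6 (n : ℕ) (hn : 0 < n) :
    (∑ i ∈ Finset.range (n + 1), (i : ℝ) * (Nat.choose (2 * n) i : ℝ))
      + (∑ i ∈ Finset.Icc (n + 1) (2 * n), (n : ℝ) * (Nat.choose (2 * n) i : ℝ))
      = (n : ℝ) * 2 ^ (2 * n) - ((n : ℝ) / 2) * (Nat.choose (2 * n) n : ℝ) := by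
  obtain ⟨m, rfl⟩ : ∃ m, n = m + 1 := ⟨n - 1, by omega⟩
  set N := m + 1
  have hA : (∑ i ∈ Finset.range (N + 1), (i : ℝ) * (Nat.choose (2 * N) i : ℝ))
      = 2 * N * 4 ^ m := by
    have := auxA m
    have h := congrArg (Nat.cast : ℕ → ℝ) this
    push_cast at h
    rw [h]; push_cast [N]; ring
  have hB : (∑ i ∈ Finset.Icc (N + 1) (2 * N), (Nat.choose (2 * N) i : ℝ))
      = ((∑ i ∈ range N, Nat.choose (2 * N) i : ℕ) : ℝ) := by
    rw [← auxB N]; push_cast; rfl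
  have hC : 2 * ((∑ i ∈ range N, Nat.choose (2 * N) i : ℕ) : ℝ)
      + (Nat.choose (2 * N) N : ℝ) = 2 ^ (2 * N) := by
    exact_mod_cast congrArg (Nat.cast : ℕ → ℝ) (auxC N)
  rw [← Finset.mul_sum, hB, hA]
  have h2 : (2 : ℝ) ^ (2 * N) = 4 * 4 ^ m := by
    rw [show 2 * N = 2 * m + 2 by omega, pow_add, pow_mul]
    norm_num [mul_comm]
  rw [h2] at hC ⊢
  nlinarith [hC]
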